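/- Fix logits g₁,...,g_N ∈ ℝ and two binary label vectors u, v ∈ {0,1}^N with u_n ≥ v_n for all n. Let ℓ(b; labels) = −Σ_n [ labels_n log σ(g_n + b) + (1 − labels_n) log(1 − σ(g_n + b)) ]. If b* minimizes ℓ(·; u) and b** minimizes ℓ(·; v), and there is some n with u_n = 1, v_n = 0, then b* ≥ b**. -/

import Mathlib

noncomputable def sigmoid (z : ℝ) : ℝ := 1 / (1 + Real.exp (-z))

noncomputable def binLoss (N : ℕ) (g : Fin N → ℝ) (labels : Fin N → ℝ) (b : ℝ) : ℝ :=
  -∑ n, (labels n * Real.log (sigmoid (g n + b)) +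
    (1 - labels n) * Real.log (1 - sigmoid (g n + b)))

lemma sigmoid_log_diff (z : ℝ) :
    Real.log (sigmoid z) - Real.log (1 - sigmoid z) = z := by
  have hpos : 0 < 1 + Real.exp (-z) := by positivity
  have h1 : sigmoid z = 1 / (1 + Real.exp (-z)) := rfl
  have h2 : 1 - sigmoid z = Real.exp (-z) / (1 + Real.exp (-z)) := by
    rw [h1]; field_simp; ring
  rw [h2, h1, Real.log_div one_ne_zero (ne_of_gt hpos),
    Real.log_div (Real.exp_ne_zero _) (ne_of_gt hpos), Real.log_one, Real.log_exp]
  ring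

lemma binLoss_diff (N : ℕ) (g : Fin N → ℝ) (u v : Fin N → ℝ) (b : ℝ) :
    binLoss N g u b = binLoss N g v b - ∑ n, (u n - v n) * (g n + b) := by
  unfold binLoss
  have key : ∀ n : Fin N, u n * Real.log (sigmoid (g n + b)) +
      (1 - u n) * Real.log (1 - sigmoid (g n + b)) =
      (v n * Real.log (sigmoid (g n + b)) +
        (1 - v n) * Real.log (1 - sigmoid (g n + b))) + (u n - v n) * (g n + b) := by
    intro n
    have h := sigmoid_log_diff (g n + b)
    linear_combination (u n - v n) * h
  rw [Finset.sum_congr rfl (fun n _ => key n), Finset.sum_add_distrib]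
  ring

theorem ordered_optimal_biases (N : ℕ) (g : Fin N → ℝ) (u v : Fin N → ℝ)
    (hu : ∀ n, u n = 0 ∨ u n = 1) (hv : ∀ n, v n = 0 ∨ v n = 1)
    (huv : ∀ n, v n ≤ u n) (hsep : ∃ n, u n = 1 ∧ v n = 0)
    (bstar bstarstar : ℝ)
    (hmin_u : ∀ b : ℝ, binLoss N g u bstar ≤ binLoss N g u b)
    (hmin_v : ∀ b : ℝ, binLoss N g v bstarstar ≤ binLoss N g v b) :
    bstarstar ≤ bstar := by
  set S : ℝ := ∑ n, (u n - v n) with hS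
  have hSpos : 0 < S := by
    obtain ⟨n0, hn0u, hn0v⟩ := hsep
    have : (1 : ℝ) ≤ S := by
      rw [hS]
      have := Finset.single_le_sum (f := fun n => u n - v n)
        (fun i _ => sub_nonneg.mpr (huv i)) (Finset.mem_univ n0)
      simp only [hn0u, hn0v] at this
      linarith
    linarith
  have hA := hmin_u bstarstar
  have hB := hmin_v bstar
  rw [binLoss_diff N g u v bstar, binLoss_diff N g u v bstarstar] at hA
  have hexp : ∀ b : ℝ, ∑ n, (u n - v n) * (g n + b)
      = (∑ n, (u n - v n) * g n) + S * b := by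
    intro b
    rw [hS, Finset.sum_mul, ← Finset.sum_add_distrib]
    apply Finset.sum_congr rfl
    intro n _; ring
  rw [hexp bstar, hexp bstarstar] at hA
  have : S * bstarstar ≤ S * bstar := by linarith
  exact le_of_mul_le_mul_left this hSpos
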